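/- arXiv:0904.0890 — 3 statements merged into one kernel-verified Lean document; each statement's English description precedes it below -/
import Mathlib

section
/- Let δ : Sym^{a-1}(ℂ³) ⊗ Sym^{b-1}((ℂ³)^∨) → Sym^a(ℂ³) ⊗ Sym^b((ℂ³)^∨) be multiplication by Σᵢ eᵢ ⊗ xᵢ, and Δ the contraction operator. For integers a,b ≥ i ≥ 0, vectors u,q ∈ ℂ³ and linear forms v,p ∈ (ℂ³)^∨, evaluating the element δ^i(Δ^i(u^a ⊗ v^b)) at the point (p,q) (i.e. evaluating the first factor at p and the second at q) gives (a!/(a-i)!)·(b!/(b-i)!)·(δ(p,q))^i·v(u)^i·u(p)^{a-i}·v(q)^{b-i}, where δ(p,q) = Σᵢ pᵢqᵢ is the natural pairing of p and q. -/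
open MvPolynomial
/-- The contraction operator Δ = Σᵢ ∂/∂eᵢ ⊗ ∂/∂xᵢ on bihomogeneous polynomials,
where the `Sum.inl` variables are the eᵢ's and the `Sum.inr` variables are the xᵢ's. -/
noncomputable def Delta (P : MvPolynomial (Fin 3 ⊕ Fin 3) ℂ) : MvPolynomial (Fin 3 ⊕ Fin 3) ℂ :=
  ∑ i : Fin 3, pderiv (Sum.inl i) (pderiv (Sum.inr i) P)

/-- The linear form corresponding to u ∈ ℂ³, in the first set of variables. -/
noncomputable def linU (u : Fin 3 → ℂ) : MvPolynomial (Fin 3 ⊕ Fin 3) ℂ :=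
  ∑ i : Fin 3, C (u i) * X (Sum.inl i)

/-- The linear form corresponding to v ∈ (ℂ³)^∨, in the second set of variables. -/
noncomputable def linV (v : Fin 3 → ℂ) : MvPolynomial (Fin 3 ⊕ Fin 3) ℂ :=
  ∑ i : Fin 3, C (v i) * X (Sum.inr i)


/-- The element Σᵢ eᵢ ⊗ xᵢ; multiplication by it is the raising operator δ. -/
noncomputable def deltaElem : MvPolynomial (Fin 3 ⊕ Fin 3) ℂ :=
  ∑ i : Fin 3, X (Sum.inl i) * X (Sum.inr i)


lemma pderiv_linU_inl (u : Fin 3 → ℂ) (j : Fin 3) :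
    pderiv (Sum.inl j) (linU u) = C (u j) := by
  simp [linU, pderiv_X, Pi.single_apply, Sum.inl.injEq, eq_comm]

lemma pderiv_linU_inr (u : Fin 3 → ℂ) (j : Fin 3) :
    pderiv (Sum.inr j) (linU u) = 0 := by
  simp [linU, pderiv_X, Pi.single_apply]

lemma pderiv_linV_inr (v : Fin 3 → ℂ) (j : Fin 3) :
    pderiv (Sum.inr j) (linV v) = C (v j) := by
  simp [linV, pderiv_X, Pi.single_apply, Sum.inr.injEq, eq_comm]

lemma pderiv_linV_inl (v : Fin 3 → ℂ) (j : Fin 3) :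
    pderiv (Sum.inl j) (linV v) = 0 := by
  simp [linV, pderiv_X, Pi.single_apply]

lemma Delta_key (u v : Fin 3 → ℂ) (m n : ℕ) :
    Delta (linU u ^ m * linV v ^ n) =
      (m : ℂ) • (n : ℂ) • (C (∑ j, v j * u j) * (linU u ^ (m-1) * linV v ^ (n-1))) := by
  unfold Delta
  have h2 : ∀ j : Fin 3, pderiv (Sum.inl j) (pderiv (Sum.inr j) (linU u ^ m * linV v ^ n)) =
      (m : ℂ) • (n : ℂ) • (C (v j * u j) * (linU u ^ (m-1) * linV v ^ (n-1))) := by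
    intro j
    rw [Derivation.leibniz]
    simp only [smul_eq_mul, pderiv_mul, pderiv_pow, pderiv_linU_inr, pderiv_linV_inr,
      pderiv_linV_inl, pderiv_linU_inl, pderiv_C_mul, pderiv_C, ← C_eq_coe_nat, mul_zero,
      zero_mul, add_zero, zero_add, map_mul, map_zero, smul_eq_C_mul]
    ring
  simp only [h2, ← Finset.smul_sum, ← Finset.sum_mul, ← map_sum]

lemma Delta_C_mul (c : ℂ) (P : MvPolynomial (Fin 3 ⊕ Fin 3) ℂ) :
    Delta (C c * P) = C c * Delta P := by
  unfold Delta
  simp [pderiv_C_mul, Finset.mul_sum]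

lemma Delta_iter (u v : Fin 3 → ℂ) (a b i : ℕ) (hia : i ≤ a) (hib : i ≤ b) :
    Delta^[i] (linU u ^ a * linV v ^ b) =
      C ((a.descFactorial i : ℂ) * (b.descFactorial i : ℂ) * (∑ j, v j * u j) ^ i) *
        (linU u ^ (a - i) * linV v ^ (b - i)) := by
  induction i with
  | zero => simp
  | succ i ih =>
    rw [Function.iterate_succ_apply', ih (Nat.le_of_succ_le hia) (Nat.le_of_succ_le hib),
      Delta_C_mul, Delta_key, Nat.sub_sub, Nat.sub_sub, Nat.descFactorial_succ,
      Nat.descFactorial_succ]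
    simp only [smul_eq_C_mul, pow_succ, map_mul, Nat.cast_mul]
    ring

/-- Evaluating δ^i(Δ^i(u^a ⊗ v^b)) at (p,q) gives
(a!/(a-i)!)·(b!/(b-i)!)·(δ(p,q))^i·v(u)^i·u(p)^{a-i}·v(q)^{b-i}. -/
theorem stmt3 (a b i : ℕ) (hia : i ≤ a) (hib : i ≤ b)
    (u q : Fin 3 → ℂ) (v p : Fin 3 → ℂ) :
    eval (Sum.elim p q) (deltaElem ^ i * Delta^[i] (linU u ^ a * linV v ^ b)) =
      (a.descFactorial i : ℂ) * (b.descFactorial i : ℂ) *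
        (∑ j, p j * q j) ^ i * (∑ j, v j * u j) ^ i *
        (∑ j, u j * p j) ^ (a - i) * (∑ j, v j * q j) ^ (b - i) := by
  rw [Delta_iter u v a b i hia hib]
  simp only [deltaElem, linU, linV, map_mul, map_pow, eval_C, map_sum, eval_X, Sum.elim_inl,
    Sum.elim_inr]
  ring
end

section
/- Let b₁,…,b_K be pairwise distinct complex numbers and p_i^b(c) = Π_{j≠i}(c−b_j)/(b_i−b_j) the Lagrange interpolation polynomials. Let d > K be an integer, x = x₁, y = λx₂ + μx₃ with (λ,μ) ≠ (0,0), and set lᵢ = bᵢ·x + y. Then for every c ∈ ℂ with c ≠ bᵢ for all i, the polynomial f(c) = Σ_{i=1}^K p_i^b(c)·lᵢ^d − (c·x + y)^d is nonzero and divisible by x^K. -/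
open MvPolynomial

private lemma lag_eval {K : ℕ} (b : Fin K → ℂ) (hb : Function.Injective b) (c : ℂ)
    (g : Polynomial ℂ) (hg : g.degree < (K : WithBot ℕ)) :
    ∑ i, (∏ j ∈ Finset.univ.erase i, (c - b j) / (b i - b j)) * g.eval (b i) = g.eval c := by
  have hcard : (((Finset.univ : Finset (Fin K)).card) : WithBot ℕ) = (K : WithBot ℕ) := by simp
  have h := Lagrange.eq_interpolate (v := b) (s := Finset.univ) hb.injOn
    (by rw [hcard]; exact hg)
  have h2 := congrArg (Polynomial.eval c) h.symm
  rw [Lagrange.interpolate_apply, Polynomial.eval_finset_sum] at h2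
  rw [← h2]
  refine Finset.sum_congr rfl fun i _ => ?_
  rw [Polynomial.eval_mul, Polynomial.eval_C, mul_comm]
  congr 1
  unfold Lagrange.basis
  rw [Polynomial.eval_prod]
  refine Finset.prod_congr rfl fun j _ => ?_
  unfold Lagrange.basisDivisor
  rw [Polynomial.eval_mul, Polynomial.eval_C, Polynomial.eval_sub, Polynomial.eval_X,
    Polynomial.eval_C, div_eq_mul_inv, mul_comm]

/-- Lagrange interpolation lemma (Lemma 3.4 of the paper): for distinct nodes b₁,…,b_K,
x = x₁, y = λx₂ + μx₃ with (λ,μ) ≠ (0,0), lᵢ = bᵢx + y and c different from all bᵢ,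
the polynomial f(c) = Σᵢ pᵢᵇ(c)·lᵢ^d − (cx+y)^d is nonzero and divisible by x^K. -/
theorem stmt4 (K d : ℕ) (hd : K < d) (b : Fin K → ℂ) (hb : Function.Injective b)
    (lam mu : ℂ) (hlm : ¬(lam = 0 ∧ mu = 0)) (c : ℂ) (hc : ∀ i, c ≠ b i)
    (x y f : MvPolynomial (Fin 3) ℂ)
    (hx : x = X 0) (hy : y = C lam * X 1 + C mu * X 2)
    (hf : f = (∑ i, C (∏ j ∈ Finset.univ.erase i, (c - b j) / (b i - b j)) *
        (C (b i) * x + y) ^ d) - (C c * x + y) ^ d) :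
    f ≠ 0 ∧ x ^ K ∣ f := by
  set P : Fin K → ℂ := fun i => ∏ j ∈ Finset.univ.erase i, (c - b j) / (b i - b j) with hP
  -- Lagrange facts
  have L1 : ∀ k < K, ∑ i, P i * b i ^ k = c ^ k := by
    intro k hk
    have := lag_eval b hb c (Polynomial.X ^ k)
      (by rw [Polynomial.degree_X_pow]; exact_mod_cast hk)
    simpa only [Polynomial.eval_pow, Polynomial.eval_X] using this
  have L2 : ∑ i, P i * b i ^ K = c ^ K - ∏ i, (c - b i) := by
    set q : Polynomial ℂ := ∏ i, (Polynomial.X - Polynomial.C (b i)) with hq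
    have hqm : q.Monic := Polynomial.monic_prod_of_monic _ _ fun i _ => Polynomial.monic_X_sub_C (b i)
    have hqd : q.degree = (K : WithBot ℕ) := by
      rw [hq, Polynomial.degree_prod]
      simp [Polynomial.degree_X_sub_C]
    have hg : (Polynomial.X ^ K - q).degree < (K : WithBot ℕ) := by
      have h := Polynomial.degree_sub_lt (p := (Polynomial.X ^ K : Polynomial ℂ)) (q := q)
        (by rw [Polynomial.degree_X_pow, hqd]) (pow_ne_zero _ Polynomial.X_ne_zero)
        (by simp [hqm.leadingCoeff, Polynomial.leadingCoeff_X_pow])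
      rwa [Polynomial.degree_X_pow] at h
    have := lag_eval b hb c (Polynomial.X ^ K - q) hg
    have heval : ∀ i : Fin K, (Polynomial.X ^ K - q).eval (b i) = b i ^ K := by
      intro i
      have : q.eval (b i) = 0 := by
        rw [hq, Polynomial.eval_prod]
        exact Finset.prod_eq_zero (Finset.mem_univ i) (by simp)
      simp [this]
    rw [Finset.sum_congr rfl fun i _ => by rw [heval i]] at this
    rw [this]
    simp [hq, Polynomial.eval_prod]
  -- binomial expansion
  have hadd : ∀ a : ℂ, (C a * x + y) ^ d = ∑ k ∈ Finset.range (d + 1),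
      C (a ^ k) * ((d.choose k : MvPolynomial (Fin 3) ℂ) * x ^ k * y ^ (d - k)) := by
    intro a
    rw [add_pow]
    refine Finset.sum_congr rfl fun k _ => ?_
    rw [mul_pow, ← C_pow]
    ring
  have key : f = ∑ k ∈ Finset.range (d + 1),
      C ((∑ i, P i * b i ^ k - c ^ k)) *
        ((d.choose k : MvPolynomial (Fin 3) ℂ) * x ^ k * y ^ (d - k)) := by
    rw [hf]
    simp_rw [hadd, Finset.mul_sum]
    rw [Finset.sum_comm, ← Finset.sum_sub_distrib]
    refine Finset.sum_congr rfl fun k _ => ?_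
    simp only [hP]
    simp_rw [← mul_assoc, ← C_mul]
    rw [← Finset.sum_mul, ← Finset.sum_mul, ← Finset.sum_mul, ← map_sum, C_sub]
    ring
  constructor
  · -- nonzero
    obtain ⟨v1, v2, hv⟩ : ∃ v1 v2 : ℂ, lam * v1 + mu * v2 = 1 := by
      by_cases hl : lam = 0
      · have hm : mu ≠ 0 := fun h => hlm ⟨hl, h⟩
        exact ⟨0, mu⁻¹, by field_simp [hl]; ring⟩
      · exact ⟨lam⁻¹, 0, by field_simp; ring⟩
    set φ : MvPolynomial (Fin 3) ℂ →ₐ[ℂ] Polynomial ℂ :=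
      aeval ![Polynomial.X, Polynomial.C v1, Polynomial.C v2] with hφ
    have hφx : φ x = Polynomial.X := by
      rw [hx, hφ]; simp only [aeval_X, Matrix.cons_val_zero]
    have hφy : φ y = 1 := by
      rw [hy, hφ]
      simp only [map_add, map_mul, aeval_C, aeval_X, Matrix.cons_val_one, Matrix.head_cons, Matrix.cons_val_zero,
        Matrix.cons_val_two, Matrix.tail_cons]
      rw [Polynomial.algebraMap_eq, ← Polynomial.C_mul, ← Polynomial.C_mul, ← Polynomial.C_add,
        hv, Polynomial.C_1]
    have hφC : ∀ a : ℂ, φ (C a) = Polynomial.C a := by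
      intro a; rw [hφ, aeval_C, Polynomial.algebraMap_eq]
    have hφf : φ f = ∑ k ∈ Finset.range (d + 1),
        Polynomial.C ((∑ i, P i * b i ^ k - c ^ k) * d.choose k) * Polynomial.X ^ k := by
      rw [key, map_sum]
      refine Finset.sum_congr rfl fun k _ => ?_
      rw [map_mul, map_mul, map_mul, map_pow, map_pow, hφx, hφy, one_pow, mul_one,
        map_natCast, hφC, Polynomial.C_mul, Polynomial.C_eq_natCast]
      ring
    have hcoeff : (φ f).coeff K = (∑ i, P i * b i ^ K - c ^ K) * d.choose K := by
      rw [hφf, Polynomial.finset_sum_coeff]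
      rw [Finset.sum_eq_single K]
      · rw [Polynomial.coeff_C_mul, Polynomial.coeff_X_pow, if_pos rfl, mul_one]
      · intro k _ hk
        rw [Polynomial.coeff_C_mul, Polynomial.coeff_X_pow, if_neg (Ne.symm hk), mul_zero]
      · intro h
        exact absurd (Finset.mem_range.mpr (by omega)) h
    have hprod : ∏ i, (c - b i) ≠ 0 :=
      Finset.prod_ne_zero_iff.mpr fun i _ => sub_ne_zero.mpr (hc i)
    have hch : (d.choose K : ℂ) ≠ 0 :=
      Nat.cast_ne_zero.mpr (Nat.choose_pos hd.le).ne'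
    have hne : (φ f).coeff K ≠ 0 := by
      rw [hcoeff, L2]
      have : c ^ K - ∏ i, (c - b i) - c ^ K = -(∏ i, (c - b i)) := by ring
      rw [this]
      exact mul_ne_zero (neg_ne_zero.mpr hprod) hch
    intro h0
    rw [h0] at hne
    simp at hne
  · -- divisibility
    rw [key]
    refine Finset.dvd_sum fun k _ => ?_
    by_cases h : k < K
    · rw [L1 k h, sub_self, map_zero, zero_mul]
      exact dvd_zero _
    · have hxd : x ^ K ∣ x ^ k := pow_dvd_pow x (le_of_not_gt h)
      exact ((hxd.mul_left _).mul_right _).mul_left _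
end

section
/- Let b₁,…,b_K be distinct complex numbers, x, y linearly independent linear forms, lᵢ = bᵢx + y, and d > K. Then for c ∉ {b₁,…,b_K}, the polynomial Σᵢ p_i^b(c)·lᵢ^d − (cx+y)^d is divisible by x^K (divisibility part of the interpolation lemma). -/
open MvPolynomial

lemma stmt5_lagrange {K : ℕ} (b : Fin K → ℂ) (hb : Function.Injective b) (c : ℂ) {k : ℕ}
    (hk : k < K) :
    ∑ i, (∏ j ∈ Finset.univ.erase i, (c - b j) / (b i - b j)) * b i ^ k = c ^ k := by
  have hinj : Set.InjOn b (Finset.univ : Finset (Fin K)) := fun a _ a' _ h => hb h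
  have h := Lagrange.eq_interpolate (s := Finset.univ) (v := b) hinj
    (f := Polynomial.X ^ k) (by
      rw [Polynomial.degree_X_pow, Finset.card_univ, Fintype.card_fin]; exact_mod_cast hk)
  have h2 := congrArg (Polynomial.eval c) h
  simp only [Lagrange.interpolate_apply, Lagrange.basis, Lagrange.basisDivisor,
    Polynomial.eval_finset_sum, Polynomial.eval_mul, Polynomial.eval_C, Polynomial.eval_prod,
    Polynomial.eval_pow, Polynomial.eval_X, Polynomial.eval_sub] at h2
  rw [eq_comm] at h2
  rw [← h2]
  refine Finset.sum_congr rfl fun i _ => ?_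
  rw [mul_comm]
  congr 1
  exact Finset.prod_congr rfl fun j _ => by rw [div_eq_inv_mul]

/-- Divisibility part of the interpolation lemma: for distinct nodes b₁,…,b_K,
linearly independent linear forms x, y, lᵢ = bᵢx + y, d > K and c ∉ {b₁,…,b_K},
the polynomial Σᵢ pᵢᵇ(c)·lᵢ^d − (cx+y)^d is divisible by x^K. -/
theorem stmt5 (K d : ℕ) (hd : K < d) (b : Fin K → ℂ) (hb : Function.Injective b)
    (x y : MvPolynomial (Fin 3) ℂ) (hx : x.IsHomogeneous 1) (hy : y.IsHomogeneous 1)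
    (hxy : LinearIndependent ℂ ![x, y])
    (c : ℂ) (hc : ∀ i, c ≠ b i) :
    x ^ K ∣ (∑ i, C (∏ j ∈ Finset.univ.erase i, (c - b j) / (b i - b j)) *
        (C (b i) * x + y) ^ d) - (C c * x + y) ^ d := by
  set p : Fin K → ℂ := fun i => ∏ j ∈ Finset.univ.erase i, (c - b j) / (b i - b j) with hp
  have expand : ∀ a : ℂ, (C a * x + y)^d = ∑ k ∈ Finset.range (d+1),
      C (a^k) * (x^k * y^(d-k)) * (d.choose k : MvPolynomial (Fin 3) ℂ) := by
    intro a
    rw [add_pow]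
    refine Finset.sum_congr rfl fun k _ => ?_
    rw [mul_pow, C_pow]
    ring
  have key : (∑ i, C (p i) * (C (b i) * x + y) ^ d) - (C c * x + y) ^ d
      = ∑ k ∈ Finset.range (d+1),
        C ((∑ i, p i * b i ^ k) - c ^ k) * (x ^ k * y ^ (d - k)) *
          (d.choose k : MvPolynomial (Fin 3) ℂ) := by
    simp_rw [expand, Finset.mul_sum, map_sub, map_sum, sub_mul, map_mul,
      Finset.sum_sub_distrib]
    rw [Finset.sum_comm]
    congr 1
    · refine Finset.sum_congr rfl fun k _ => ?_
      rw [Finset.sum_mul, Finset.sum_mul]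
      exact Finset.sum_congr rfl fun i _ => by ring
  rw [key]
  refine Finset.dvd_sum fun k _ => ?_
  by_cases h : k < K
  · rw [stmt5_lagrange b hb c h, sub_self, map_zero, zero_mul, zero_mul]; exact dvd_zero _
  · exact (((pow_dvd_pow x (not_lt.mp h)).mul_right _).mul_left _).mul_right _
end
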